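/- For integers 7 ≤ p ≤ n and θ := (p-1)/n, define (σ_{n,p})^2 := (1/4) Σ_{j=1}^{p-1} (ψ_1((n-j)/2) - ψ_1(n/2)). Then (σ_{n,p})^2 ≥ (1/4)(log(1/(1-θ)) - θ). -/

import Mathlib

/-- The `k`-th polygamma function. -/
noncomputable def polygamma (k : ℕ) (x : ℝ) : ℝ :=
  iteratedDeriv (k + 1) (fun y => Real.log (Real.Gamma y)) x

open Filter Finset Topology

namespace VLB

noncomputable def S (y : ℝ) : ℝ := ∑' k : ℕ, 1 / (y + k) ^ 2

lemma summable_aux {c : ℝ} (hc : 0 < c) : Summable (fun k : ℕ => 1 / (c + k) ^ 2) := by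
  rw [← summable_nat_add_iff 1]
  have hbase : Summable (fun k : ℕ => 1 / ((k : ℝ) + 1) ^ 2) := by
    have := (summable_nat_add_iff (f := fun k : ℕ => 1 / (k : ℝ) ^ 2) 1).2
      (Real.summable_one_div_nat_pow.2 one_lt_two)
    refine this.congr fun k => ?_
    push_cast
    ring_nf
  refine Summable.of_nonneg_of_le (fun k => by positivity) (fun k => ?_) hbase
  have h1 : (0:ℝ) < (k:ℝ) + 1 := by positivity
  have h2 : ((k:ℝ) + 1) ≤ c + ((k:ℕ)+1 : ℕ) := by push_cast; linarith
  refine one_div_le_one_div_of_le (by positivity) ?_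
  have : ((k:ℝ)+1)^2 ≤ (c + ((k:ℕ)+1 : ℕ))^2 := by
    apply pow_le_pow_left₀ (by positivity) h2
  exact this

lemma term_upper {a : ℝ} (ha : 0 < a) : 1/(a+1)^2 ≤ 1/a - 1/(a+1) := by
  have h1 : (0:ℝ) < a + 1 := by linarith
  rw [div_sub_div _ _ ha.ne' h1.ne']
  have : a * 1 = a := mul_one a
  rw [one_mul, mul_one]
  have h2 : a + 1 - a = 1 := by ring
  rw [h2]
  refine one_div_le_one_div_of_le (by positivity) ?_
  nlinarith

lemma term_lower {a : ℝ} (ha : 0 < a) :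
    (1/a - 1/(a+1)) + (1/2)*(1/a^2 - 1/(a+1)^2) ≤ 1/a^2 := by
  have h1 : (0:ℝ) < a + 1 := by linarith
  have key : 1/a^2 - ((1/a - 1/(a+1)) + (1/2)*(1/a^2 - 1/(a+1)^2))
      = 1/(2*a^2*(a+1)^2) := by
    field_simp
    ring
  have hpos : (0:ℝ) < 1/(2*a^2*(a+1)^2) := by positivity
  linarith

lemma partial_upper {x : ℝ} (hx : 0 < x) :
    ∀ n : ℕ, ∑ k ∈ range (n+1), 1/(x+k)^2 ≤ 1/x^2 + 1/x - 1/(x+n) := by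
  intro n
  induction n with
  | zero => simp
  | succ n ih =>
      rw [Finset.sum_range_succ]
      have h := term_upper (a := x + n) (by positivity)
      have hc : (x + (↑(n+1) : ℝ)) = (x + n) + 1 := by push_cast; ring
      rw [hc]
      linarith

lemma S_upper {x : ℝ} (hx : 0 < x) : S x ≤ 1/x + 1/x^2 := by
  refine Real.tsum_le_of_sum_range_le (fun n => by positivity) (fun n => ?_)
  cases n with
  | zero => simp; positivity
  | succ n =>
      have := partial_upper hx n
      have h2 : (0:ℝ) < 1/(x+n) := by positivity
      linarith

lemma partial_lower {x : ℝ} (hx : 0 < x) :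
    ∀ n : ℕ, (1/x - 1/(x+(n+1))) + (1/2)*(1/x^2 - 1/(x+(n+1))^2)
      ≤ ∑ k ∈ range (n+1), 1/(x+k)^2 := by
  intro n
  induction n with
  | zero =>
      simp only [Nat.cast_zero, zero_add, Finset.sum_range_one, Nat.cast_ofNat]
      have := term_lower hx
      simpa using this
  | succ n ih =>
      rw [Finset.sum_range_succ]
      have h := term_lower (a := x + (n+1)) (by positivity)
      push_cast at ih h ⊢
      have e : x + (↑n + 1 + 1) = x + (↑n + 1) + 1 := by ring
      rw [e]
      linarith

lemma S_lower {x : ℝ} (hx : 0 < x) : 1/x + 1/(2*x^2) ≤ S x := by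
  have hsum := summable_aux hx
  have hb : ∀ n : ℕ,
      (1/x - 1/(x+(n+1))) + (1/2)*(1/x^2 - 1/(x+(n+1))^2) ≤ S x := by
    intro n
    refine le_trans (partial_lower hx n) ?_
    exact hsum.sum_le_tsum (range (n+1)) (fun k _ => by positivity)
  have htend0 : Tendsto (fun n : ℕ => 1/(x+(n+1))) atTop (𝓝 0) := by
    have h1 : Tendsto (fun n : ℕ => x + ((n:ℝ)+1)) atTop atTop := by
      apply tendsto_atTop_add_const_left
      exact tendsto_atTop_add_const_right _ _ tendsto_natCast_atTop_atTop
    simpa [one_div, Pi.inv_def] using h1.inv_tendsto_atTop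
  have htend : Tendsto (fun n : ℕ =>
      (1/x - 1/(x+(n+1))) + (1/2)*(1/x^2 - 1/(x+(n+1))^2)) atTop
      (𝓝 ((1/x - 0) + (1/2)*(1/x^2 - 0*0))) := by
    exact ((tendsto_const_nhds.sub htend0).add
      (tendsto_const_nhds.mul (tendsto_const_nhds.sub (by
        simpa [pow_two] using htend0.mul htend0))))
  have := le_of_tendsto htend (Eventually.of_forall hb)
  calc 1/x + 1/(2*x^2) = (1/x - 0) + (1/2)*(1/x^2 - 0*0) := by ring_nf
    _ ≤ S x := this

end VLB

namespace VLB
open Real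

noncomputable def F (n : ℕ) (y : ℝ) : ℝ :=
  y * Real.log n + Real.log (Nat.factorial n : ℝ) - ∑ k ∈ range (n+1), Real.log (y + k)

noncomputable def F1 (n : ℕ) (y : ℝ) : ℝ :=
  Real.log n - ∑ k ∈ range (n+1), 1/(y + k)

noncomputable def F2 (n : ℕ) (y : ℝ) : ℝ := ∑ k ∈ range (n+1), 1/(y + k)^2

noncomputable def T (i : ℕ) (y : ℝ) : ℝ :=
  (Real.log (i+2) - Real.log (i+1)) - 1/(y + (i+2))

noncomputable def psi (y : ℝ) : ℝ := -(1/y) - 1/(y+1) + ∑' i : ℕ, T i y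

lemma hasDerivAt_F (n : ℕ) {y : ℝ} (hy : 0 < y) : HasDerivAt (F n) (F1 n y) y := by
  have h2 : HasDerivAt (fun t => ∑ k ∈ range (n+1), Real.log (t + k))
      (∑ k ∈ range (n+1), 1/(y + k)) y := by
    apply HasDerivAt.fun_sum
    intro k _
    have h := ((hasDerivAt_id y).add_const (k:ℝ)).log (by positivity : y + (k:ℝ) ≠ 0)
    simpa [one_div] using h
  have h1 : HasDerivAt (fun t : ℝ => t * Real.log n + Real.log (Nat.factorial n : ℝ))
      (Real.log n) y := (hasDerivAt_mul_const _).add_const _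
  exact h1.fun_sub h2

lemma hasDerivAt_F1 (n : ℕ) {y : ℝ} (hy : 0 < y) : HasDerivAt (F1 n) (F2 n y) y := by
  have h2 : HasDerivAt (fun t : ℝ => ∑ k ∈ range (n+1), 1/(t + (k:ℝ)))
      (∑ k ∈ range (n+1), -(1/(y + (k:ℝ))^2)) y := by
    apply HasDerivAt.fun_sum
    intro k _
    have h := ((hasDerivAt_id y).add_const (k:ℝ)).inv (by positivity : y + (k:ℝ) ≠ 0)
    simpa [one_div, neg_div, Pi.inv_def] using h
  have := h2.const_sub (Real.log n)
  have hF1 : F1 n = fun t : ℝ => Real.log n - ∑ k ∈ range (n+1), 1/(t + (k:ℝ)) := rfl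
  rw [hF1]
  simpa [F2, one_div, Finset.sum_neg_distrib] using this

lemma F_eq (n : ℕ) (hn : 1 ≤ n) {y : ℝ} (hy : 0 < y) :
    F n y = Real.log (Real.GammaSeq y n) := by
  have hn0 : (0:ℝ) < n := by exact_mod_cast hn
  have hprod : ∀ j ∈ range (n+1), y + (j:ℝ) ≠ 0 := fun j _ => by positivity
  have hprodpos : (0:ℝ) < ∏ j ∈ range (n+1), (y + j) :=
    Finset.prod_pos fun j _ => by positivity
  rw [Real.GammaSeq, Real.log_div (by positivity) hprodpos.ne',
    Real.log_mul (by positivity) (by positivity), Real.log_rpow hn0,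
    Real.log_prod hprod, F]

lemma F_tendsto {y : ℝ} (hy : 0 < y) :
    Tendsto (fun n => F n y) atTop (𝓝 (Real.log (Real.Gamma y))) := by
  have h := (Real.GammaSeq_tendsto_Gamma y).log (Real.Gamma_pos_of_pos hy).ne'
  refine h.congr' ?_
  filter_upwards [eventually_ge_atTop 1] with n hn
  exact (F_eq n hn hy).symm

lemma F1_eq (m : ℕ) {y : ℝ} (hy : 0 < y) :
    F1 (m+1) y = -(1/y) - 1/(y+1) + ∑ i ∈ range m, T i y := by
  have hlog : Real.log (↑(m+1) : ℝ) = ∑ i ∈ range m, (Real.log (i+2) - Real.log (i+1)) := by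
    have := Finset.sum_range_sub (fun i : ℕ => Real.log ((i:ℝ)+1)) m
    push_cast at this ⊢
    norm_num at this
    rw [← this, Finset.sum_sub_distrib]
    congr 1
    apply Finset.sum_congr rfl
    intro i _
    congr 1
    ring
  unfold F1 T
  rw [Finset.sum_range_succ', Finset.sum_range_succ', hlog, Finset.sum_sub_distrib,
    Finset.sum_sub_distrib]
  push_cast
  have e1 : ∀ i ∈ range m, 1/(y + ((i:ℝ)+1+1)) = 1/(y+((i:ℝ)+2)) := by
    intro i _
    congr 1
    ring
  rw [Finset.sum_congr rfl e1]
  simp only [Finset.sum_sub_distrib, add_zero]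
  ring

lemma log_diff_ge (i : ℕ) : 1/((i:ℝ)+2) ≤ Real.log ((i:ℝ)+2) - Real.log ((i:ℝ)+1) := by
  have h1 : (0:ℝ) < (i:ℝ)+1 := by positivity
  have h2 : (0:ℝ) < (i:ℝ)+2 := by positivity
  have h := Real.log_le_sub_one_of_pos (x := ((i:ℝ)+1)/((i:ℝ)+2)) (by positivity)
  rw [Real.log_div h1.ne' h2.ne'] at h
  have e : ((i:ℝ)+1)/((i:ℝ)+2) - 1 = -(1/((i:ℝ)+2)) := by field_simp; norm_num
  rw [e] at h
  linarith

lemma log_diff_le (i : ℕ) : Real.log ((i:ℝ)+2) - Real.log ((i:ℝ)+1) ≤ 1/((i:ℝ)+1) := by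
  have h1 : (0:ℝ) < (i:ℝ)+1 := by positivity
  have h2 : (0:ℝ) < (i:ℝ)+2 := by positivity
  have h := Real.log_le_sub_one_of_pos (x := ((i:ℝ)+2)/((i:ℝ)+1)) (by positivity)
  rw [Real.log_div h2.ne' h1.ne'] at h
  have e : ((i:ℝ)+2)/((i:ℝ)+1) - 1 = 1/((i:ℝ)+1) := by field_simp; ring
  rw [e] at h
  linarith

lemma T_nonneg (i : ℕ) {y : ℝ} (hy : 0 ≤ y) : 0 ≤ T i y := by
  unfold T
  have h1 := log_diff_ge i
  have h2 : 1/(y + ((i:ℝ)+2)) ≤ 1/((i:ℝ)+2) :=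
    one_div_le_one_div_of_le (by positivity) (by linarith)
  push_cast
  linarith

lemma T_le (i : ℕ) {y B : ℝ} (hy : 0 ≤ y) (hyB : y ≤ B) (hB : 0 ≤ B) :
    T i y ≤ (B+1)/((i:ℝ)+1)^2 := by
  unfold T
  have h1 := log_diff_le i
  have h2 : 1/((i:ℝ)+1) - 1/(y + ((i:ℝ)+2)) ≤ (B+1)/((i:ℝ)+1)^2 := by
    have hi1 : (0:ℝ) < (i:ℝ)+1 := by positivity
    have hden : (0:ℝ) < y + ((i:ℝ)+2) := by positivity
    rw [div_sub_div _ _ hi1.ne' hden.ne']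
    have hnum : y + ((i:ℝ)+2) - ((i:ℝ)+1) * 1 ≤ B + 1 := by nlinarith
    rw [one_mul]
    apply div_le_div₀ (by linarith) hnum (by positivity)
    nlinarith
  push_cast
  linarith

lemma summable_u {B : ℝ} : Summable (fun i : ℕ => (B+1)/((i:ℝ)+1)^2) := by
  have hbase : Summable (fun k : ℕ => 1 / ((k : ℝ) + 1) ^ 2) := by
    have := (summable_nat_add_iff (f := fun k : ℕ => 1 / (k : ℝ) ^ 2) 1).2
      (Real.summable_one_div_nat_pow.2 one_lt_two)
    refine this.congr fun k => ?_
    push_cast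
    ring_nf
  simpa [div_eq_mul_inv, one_div] using hbase.mul_left (B+1)

lemma summable_T {y : ℝ} (hy : 0 ≤ y) : Summable (fun i : ℕ => T i y) :=
  Summable.of_nonneg_of_le (fun i => T_nonneg i hy)
    (fun i => T_le i hy le_rfl hy) summable_u

section fixed

variable {x : ℝ} (hx : 0 < x)

lemma hT_unif (hx : 0 < x) : TendstoUniformlyOn (fun m y => ∑ i ∈ range m, T i y)
    (fun y => ∑' i : ℕ, T i y) atTop (Set.Ioo (x/2) (x+2)) := by
  apply tendstoUniformlyOn_tsum_nat (u := fun i => (x+2+1)/((i:ℝ)+1)^2) summable_u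
  intro i y hy
  have hy0 : (0:ℝ) ≤ y := le_of_lt (lt_trans (half_pos hx) hy.1)
  rw [Real.norm_eq_abs, abs_of_nonneg (T_nonneg i hy0)]
  exact T_le i hy0 hy.2.le (by linarith)

lemma hF1_unif (hx : 0 < x) :
    TendstoUniformlyOn F1 psi atTop (Set.Ioo (x/2) (x+2)) := by
  rw [Metric.tendstoUniformlyOn_iff]
  intro ε hε
  have h := (Metric.tendstoUniformlyOn_iff.1 (hT_unif hx)) ε hε
  obtain ⟨M, hM⟩ := eventually_atTop.1 h
  rw [eventually_atTop]
  refine ⟨M+1, fun n hn y hy => ?_⟩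
  obtain ⟨m, rfl⟩ : ∃ m, n = m + 1 := ⟨n - 1, by omega⟩
  have hy0 : (0:ℝ) < y := lt_trans (half_pos hx) hy.1
  rw [F1_eq m hy0]
  have := hM m (by omega) y hy
  rw [Real.dist_eq] at this ⊢
  have e : psi y - (-(1/y) - 1/(y+1) + ∑ i ∈ range m, T i y)
      = (∑' i : ℕ, T i y) - ∑ i ∈ range m, T i y := by
    unfold psi; ring
  rw [e]
  simpa [Real.dist_eq] using this

lemma hF2_unif (hx : 0 < x) :
    TendstoUniformlyOn F2 S atTop (Set.Ioo (x/2) (x+2)) := by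
  have base : TendstoUniformlyOn (fun m y => ∑ k ∈ range m, 1/(y+(k:ℝ))^2)
      S atTop (Set.Ioo (x/2) (x+2)) := by
    apply tendstoUniformlyOn_tsum_nat (u := fun k => 1/(x/2+(k:ℝ))^2) (summable_aux (half_pos hx))
    intro k y hy
    rw [Real.norm_eq_abs, abs_of_nonneg (by positivity)]
    apply one_div_le_one_div_of_le (by positivity)
    have := hy.1
    nlinarith [Nat.cast_nonneg (α := ℝ) k]
  rw [Metric.tendstoUniformlyOn_iff] at base ⊢
  intro ε hε
  obtain ⟨M, hM⟩ := eventually_atTop.1 (base ε hε)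
  rw [eventually_atTop]
  exact ⟨M, fun n hn y hy => hM (n+1) (by omega) y hy⟩

lemma polygamma_one_eq (hx : 0 < x) : polygamma 1 x = S x := by
  set s : Set ℝ := Set.Ioo (x/2) (x+2) with hs_def
  have hxs : x ∈ s := ⟨by linarith, by linarith⟩
  have hs : IsOpen s := isOpen_Ioo
  have hpos : ∀ y ∈ s, (0:ℝ) < y := fun y hy => lt_trans (half_pos hx) hy.1
  have hlog : ∀ y ∈ s, HasDerivAt (fun t => Real.log (Real.Gamma t)) (psi y) y := by
    intro y hy
    exact hasDerivAt_of_tendstoUniformlyOn hs (hF1_unif hx)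
      (Eventually.of_forall fun n z hz => hasDerivAt_F n (hpos z hz))
      (fun z hz => F_tendsto (hpos z hz)) hy
  have hpsi : ∀ y ∈ s, HasDerivAt psi (S y) y := by
    intro y hy
    exact hasDerivAt_of_tendstoUniformlyOn hs (hF2_unif hx)
      (Eventually.of_forall fun n z hz => hasDerivAt_F1 n (hpos z hz))
      (fun z hz => (hF1_unif hx).tendsto_at hz) hy
  have h1 : deriv (fun t => Real.log (Real.Gamma t)) =ᶠ[𝓝 x] psi := by
    filter_upwards [hs.mem_nhds hxs] with y hy
    exact (hlog y hy).deriv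
  calc polygamma 1 x = deriv (deriv (fun t => Real.log (Real.Gamma t))) x := by
        rw [polygamma, iteratedDeriv_succ, iteratedDeriv_one]
    _ = deriv psi x := h1.deriv_eq
    _ = S x := (hpsi x hxs).deriv

end fixed

lemma polygamma_lower {x : ℝ} (hx : 0 < x) : 1/x + 1/(2*x^2) ≤ polygamma 1 x := by
  rw [polygamma_one_eq hx]; exact S_lower hx

lemma polygamma_upper {x : ℝ} (hx : 0 < x) : polygamma 1 x ≤ 1/x + 1/x^2 := by
  rw [polygamma_one_eq hx]; exact S_upper hx

end VLB

/-- For `7 ≤ p ≤ n` and `θ := (p-1)/n`, the variance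
`σ²_{n,p} := (1/4) Σ_{j=1}^{p-1} (ψ₁((n-j)/2) - ψ₁(n/2))` satisfies
`σ²_{n,p} ≥ (1/4)(log(1/(1-θ)) - θ)`. -/
theorem variance_lower_bound_rough (p n : ℕ) (hp : 7 ≤ p) (hpn : p ≤ n) :
    (1/4 : ℝ) * (Real.log (1 / (1 - ((p:ℝ) - 1)/n)) - ((p:ℝ) - 1)/n)
      ≤ (1/4 : ℝ) * ∑ j ∈ Finset.Icc 1 (p - 1),
          (polygamma 1 (((n:ℝ) - (j:ℝ))/2) - polygamma 1 ((n:ℝ)/2)) := by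
  set q : ℕ := p - 1 with hq_def
  have hq6 : 6 ≤ q := by omega
  have hqn : q ≤ n - 1 := by omega
  have hN7 : (7:ℝ) ≤ (n:ℝ) := by exact_mod_cast le_trans hp hpn
  have hN0 : (0:ℝ) < (n:ℝ) := by linarith
  set N : ℝ := (n:ℝ) with hN_def
  have hqN : (q:ℝ) ≤ N - 1 := by
    have : (q:ℝ) ≤ ((n-1:ℕ):ℝ) := by exact_mod_cast hqn
    have h1 : ((n-1:ℕ):ℝ) = N - 1 := by
      have : 1 ≤ n := by omega
      push_cast [Nat.cast_sub this]
      ring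
    linarith
  have hpq : (p:ℝ) - 1 = (q:ℝ) := by
    have : 1 ≤ p := by omega
    rw [hq_def]
    push_cast [Nat.cast_sub this]
    ring
  have hNq : (0:ℝ) < N - q := by linarith
  -- the per-term lower bound
  have key : ∀ j ∈ Finset.Icc 1 q,
      (Real.log (N - j + 1) - Real.log (N - j)) - 1/N + ((j:ℝ)-3)/N^2
        ≤ polygamma 1 ((N - j)/2) - polygamma 1 (N/2) := by
    intro j hj
    rw [Finset.mem_Icc] at hj
    have hj1 : (1:ℝ) ≤ (j:ℝ) := by exact_mod_cast hj.1
    have hjq : (j:ℝ) ≤ (q:ℝ) := by exact_mod_cast hj.2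
    have hNj : (1:ℝ) ≤ N - j := by linarith
    have hNj0 : (0:ℝ) < N - j := by linarith
    -- polygamma bounds
    have hA : 2/(N-j) + 2/(N-j)^2 ≤ polygamma 1 ((N - j)/2) := by
      have h := VLB.polygamma_lower (x := (N-j)/2) (by positivity)
      have e1 : 1/((N-j)/2) = 2/(N-j) := by
        rw [one_div_div]
      have e2 : 1/(2*((N-j)/2)^2) = 2/(N-j)^2 := by
        rw [div_pow]
        field_simp
      rw [e1, e2] at h
      exact h
    have hB : polygamma 1 (N/2) ≤ 2/N + 4/N^2 := by
      have h := VLB.polygamma_upper (x := N/2) (by positivity)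
      have e1 : 1/(N/2) = 2/N := one_div_div _ _
      have e2 : 1/(N/2)^2 = 4/N^2 := by
        rw [div_pow]
        field_simp
        norm_num
      rw [e1, e2] at h
      exact h
    -- log bound
    have hC : Real.log (N - j + 1) - Real.log (N - j) ≤ 1/(N-j) := by
      have h := Real.log_le_sub_one_of_pos (x := (N-j+1)/(N-j)) (by positivity)
      rw [Real.log_div (by linarith) hNj0.ne'] at h
      have e : (N-j+1)/(N-j) - 1 = 1/(N-j) := by field_simp; ring
      rw [e] at h
      linarith
    -- harmonic bound
    have hD : 1/N + ((j:ℝ)-1)/N^2 ≤ 1/(N-j+1) := by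
      have hd0 : (0:ℝ) < N - j + 1 := by linarith
      have e : 1/(N-j+1) - 1/N = ((j:ℝ)-1)/(N*(N-j+1)) := by
        field_simp
        ring
      have hden : (0:ℝ) < N*(N-j+1) := mul_pos hN0 hd0
      have h1d : 1/N^2 ≤ 1/(N*(N-j+1)) := by
        apply one_div_le_one_div_of_le hden
        nlinarith
      have h2 : ((j:ℝ)-1)/N^2 ≤ ((j:ℝ)-1)/(N*(N-j+1)) := by
        calc ((j:ℝ)-1)/N^2 = ((j:ℝ)-1)*(1/N^2) := by ring
          _ ≤ ((j:ℝ)-1)*(1/(N*(N-j+1))) := mul_le_mul_of_nonneg_left h1d (by linarith)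
          _ = ((j:ℝ)-1)/(N*(N-j+1)) := by ring
      linarith
    have hE : 1/(N-j+1) ≤ 1/(N-j) :=
      one_div_le_one_div_of_le hNj0 (by linarith)
    have hF : 1/N^2 ≤ 1/(N-j)^2 := by
      apply one_div_le_one_div_of_le (by positivity)
      nlinarith
    have hj3 : ((j:ℝ)-3)/N^2 = ((j:ℝ)-1)/N^2 - 2*(1/N^2) := by ring
    have h2N : (2:ℝ)/N = 2*(1/N) := by ring
    have h4N : (4:ℝ)/N^2 = 4*(1/N^2) := by ring
    have h2j : (2:ℝ)/(N-j) = 2*(1/(N-j)) := by ring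
    have h2j2 : (2:ℝ)/(N-j)^2 = 2*(1/(N-j)^2) := by ring
    have h1N : (1:ℝ)/N ≤ 1/N := le_rfl
    linarith
  -- sum the bounds
  have hsum := Finset.sum_le_sum key
  -- telescoping
  have htel : ∑ j ∈ Finset.Icc 1 q, (Real.log (N - j + 1) - Real.log (N - j))
      = Real.log N - Real.log (N - q) := by
    rw [← Finset.Ico_add_one_right_eq_Icc, Finset.sum_Ico_eq_sum_range]
    have e : ∀ i ∈ range (q + 1 - 1), (Real.log (N - ((1+i : ℕ):ℝ) + 1) - Real.log (N - ((1+i : ℕ):ℝ)))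
        = (fun t : ℕ => Real.log (N - t)) i - (fun t : ℕ => Real.log (N - t)) (i+1) := by
      intro i _
      simp only
      push_cast
      rw [show N - (1+(i:ℝ)) + 1 = N - i from by ring, show N - (1+(i:ℝ)) = N - ((i:ℝ)+1) from by ring]
    rw [Finset.sum_congr rfl e, Finset.sum_range_sub']
    simp only [Nat.add_sub_cancel]
    norm_num
  have hgauss : (0:ℝ) ≤ ∑ j ∈ Finset.Icc 1 q, ((j:ℝ) - 3) := by
    clear hsum htel key hqn hqN hNq hq_def
    clear_value q
    clear hpq
    induction q, hq6 using Nat.le_induction with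
    | base =>
        rw [show Finset.Icc 1 6 = {1,2,3,4,5,6} from rfl]
        norm_num
    | succ m hm ih =>
        rw [Finset.sum_Icc_succ_top (by omega)]
        have : (0:ℝ) ≤ ((m:ℝ)+1) - 3 := by
          have : (6:ℝ) ≤ (m:ℝ) := by exact_mod_cast hm
          linarith
        push_cast
        linarith
  -- put it together
  have hcard : (Finset.Icc 1 q).card = q := by
    rw [Nat.card_Icc]
    omega
  have hsplit : ∑ j ∈ Finset.Icc 1 q,
      ((Real.log (N - j + 1) - Real.log (N - j)) - 1/N + ((j:ℝ)-3)/N^2)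
      = (Real.log N - Real.log (N - q)) - q*(1/N)
        + (∑ j ∈ Finset.Icc 1 q, ((j:ℝ)-3))/N^2 := by
    rw [Finset.sum_add_distrib, Finset.sum_sub_distrib, htel, Finset.sum_const, hcard,
      ← Finset.sum_div]
    ring
  have hlogeq : Real.log (1 / (1 - ((p:ℝ) - 1)/N)) = Real.log N - Real.log (N - q) := by
    rw [hpq]
    have e : 1 - (q:ℝ)/N = (N - q)/N := by field_simp
    rw [e, one_div_div, Real.log_div hN0.ne' hNq.ne']
  have hfinal : Real.log (1 / (1 - ((p:ℝ) - 1)/N)) - ((p:ℝ) - 1)/N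
      ≤ ∑ j ∈ Finset.Icc 1 q, (polygamma 1 ((N - j)/2) - polygamma 1 (N/2)) := by
    rw [hlogeq, hpq]
    have h2 : (0:ℝ) ≤ (∑ j ∈ Finset.Icc 1 q, ((j:ℝ)-3))/N^2 := by positivity
    calc Real.log N - Real.log (N - q) - (q:ℝ)/N
        ≤ (Real.log N - Real.log (N - q)) - q*(1/N)
            + (∑ j ∈ Finset.Icc 1 q, ((j:ℝ)-3))/N^2 := by
          rw [mul_one_div]
          linarith
      _ = ∑ j ∈ Finset.Icc 1 q,
            ((Real.log (N - j + 1) - Real.log (N - j)) - 1/N + ((j:ℝ)-3)/N^2) := hsplit.symm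
      _ ≤ _ := hsum
  have h4 : (0:ℝ) ≤ 1/4 := by norm_num
  exact mul_le_mul_of_nonneg_left hfinal h4
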